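/- Let φ be a complete flow on a topological space X and let U₀ ⊆ X be a subset that is dynamically convex for φ (if x, φ(t, x) ∈ U₀ with t ≥ 0 then φ(s, x) ∈ U₀ for s ∈ [0, t]). For T > 0 define U = φ(-T)⁻¹-image intersection, i.e. U = {x : φ(-T, x) ∈ U₀} ∩ U₀ ∩ {x : φ(T, x) ∈ U₀} — equivalently U = φ_{-T}(U₀) ∩ U₀ ∩ φ_T(U₀). Then U is also dynamically convex for φ. -/
import Mathlib


/-- A subset `A` is dynamically convex for the flow `φ` if forward trajectory segments
with endpoints in `A` stay in `A`. -/
def DynConvex {X : Type*} (φ : ℝ → X → X) (A : Set X) : Prop :=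
  ∀ x t, x ∈ A → 0 ≤ t → φ t x ∈ A → ∀ s ∈ Set.Icc 0 t, φ s x ∈ A

/-- If `U₀` is dynamically convex for a complete flow `φ` and `T > 0`, then
`U = φ₋ₜ(U₀) ∩ U₀ ∩ φₜ(U₀) = {x : φ(-T,x) ∈ U₀} ∩ U₀ ∩ {x : φ(T,x) ∈ U₀}` is also
dynamically convex. -/
theorem inter_dynConvex {X : Type*} (φ : ℝ → X → X)
    (h0 : ∀ x, φ 0 x = x) (hgrp : ∀ t s x, φ t (φ s x) = φ (t + s) x)
    (U₀ : Set X) (hconv : DynConvex φ U₀) (T : ℝ) (hT : 0 < T)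
    (U : Set X) (hU : U = {x | φ (-T) x ∈ U₀} ∩ U₀ ∩ {x | φ T x ∈ U₀}) :
    DynConvex φ U := by
  subst hU
  rintro x t ⟨⟨hxm, hx0⟩, hxp⟩ ht ⟨⟨htm, ht0⟩, htp⟩ s hs
  refine ⟨⟨?_, ?_⟩, ?_⟩
  · -- φ (-T) (φ s x) ∈ U₀
    have key : φ t (φ (-T) x) ∈ U₀ := by
      rw [hgrp]; rw [Set.mem_setOf_eq, hgrp, add_comm] at htm; exact htm
    have := hconv (φ (-T) x) t hxm ht key s hs
    rw [hgrp] at this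
    show φ (-T) (φ s x) ∈ U₀
    rw [hgrp, add_comm]; exact this
  · exact hconv x t hx0 ht ht0 s hs
  · -- φ T (φ s x) ∈ U₀
    have key : φ t (φ T x) ∈ U₀ := by
      rw [hgrp]; rw [Set.mem_setOf_eq, hgrp, add_comm] at htp; exact htp
    have := hconv (φ T x) t hxp ht key s hs
    rw [hgrp] at this
    show φ T (φ s x) ∈ U₀
    rw [hgrp, add_comm]; exact this
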